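/- Let A be a local ring with maximal ideal m, let V be a finite free A-module with decomposition V = ⊕ᵢ₌₁^r Vᵢ into finite free submodules, and let t : V → V act on each Vᵢ as multiplication by a unit cᵢ ∈ A^×, where the residues c̄ᵢ ∈ A/m are pairwise distinct. Then the centralizer of t in End_A(V) equals ∏ᵢ End_A(Vᵢ), i.e., an A-linear endomorphism commutes with t if and only if it preserves each Vᵢ. -/

import Mathlib

/-- Let `V = ⊕ᵢ Vᵢ` be a finite free module over a local ring, and let `t` act on each
`Vᵢ` as multiplication by a unit `cᵢ` whose residues are pairwise distinct. Then an
endomorphism commutes with `t` if and only if it preserves each `Vᵢ`; i.e. the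
centralizer of `t` is `∏ᵢ End(Vᵢ)`. -/
theorem stmt_16 {A V : Type*} [CommRing A] [IsLocalRing A] [AddCommGroup V] [Module A V]
    [Module.Free A V] [Module.Finite A V]
    {r : ℕ} (W : Fin r → Submodule A V) (hW : DirectSum.IsInternal W)
    (hfree : ∀ i, Module.Free A (W i)) (hfin : ∀ i, Module.Finite A (W i))
    (c : Fin r → Aˣ)
    (hdist : ∀ i j, i ≠ j →
      IsLocalRing.residue A (c i) ≠ IsLocalRing.residue A (c j))
    (t : Module.End A V) (ht : ∀ i, ∀ x ∈ W i, t x = (c i : A) • x)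
    (h : Module.End A V) :
    Commute h t ↔ ∀ i, ∀ x ∈ W i, h x ∈ W i := by
  set e := LinearEquiv.ofBijective (DirectSum.coeLinearMap W) hW with he
  have he_of : ∀ (j : Fin r) (x : W j), e (DirectSum.of (fun i => W i) j x) = (x : V) := by
    intro j x
    simp [he]
    exact DirectSum.coeLinearMap_of _ _ _
  have hsum : ∀ v : V, v = ∑ j, ((e.symm v) j : V) := by
    intro v
    conv_lhs => rw [← e.apply_symm_apply v, ← DirectSum.sum_univ_of (e.symm v)]
    rw [map_sum]
    exact Finset.sum_congr rfl fun j _ => he_of j _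
  -- a unit difference
  have hunit : ∀ i j : Fin r, i ≠ j → IsUnit ((c j : A) - (c i : A)) := by
    intro i j hij
    rw [← IsLocalRing.notMem_maximalIdeal]
    intro hm
    have : IsLocalRing.residue A ((c j : A) - (c i : A)) = 0 :=
      (Ideal.Quotient.eq_zero_iff_mem).2 hm
    rw [map_sub, sub_eq_zero] at this
    exact hdist j i (Ne.symm hij) this
  constructor
  · intro hcomm i x hx
    have key : t (h x) = (c i : A) • h x := by
      have : t (h x) = h (t x) := by
        have := congrFun (congrArg DFunLike.coe hcomm.symm.eq) x
        simpa using this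
      rw [this, ht i x hx, map_smul]
    set u := e.symm (h x) with hu
    have hzero : ∀ j, j ≠ i → (u j : V) = 0 := by
      intro j hji
      -- compare decompositions of t (h x)
      have h1 : t (h x) = ∑ k, (c k : A) • ((u k : V)) := by
        conv_lhs => rw [hsum (h x)]
        rw [map_sum]
        exact Finset.sum_congr rfl fun k _ => ht k _ (u k).2
      have h2 : t (h x) = ∑ k, (c i : A) • ((u k : V)) := by
        rw [key, hsum (h x), Finset.smul_sum]
      have h3 : e (∑ k, DirectSum.of (fun l => W l) k (((c k : A) - (c i : A)) • u k)) = 0 := by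
        rw [map_sum]
        have : ∀ k, e (DirectSum.of (fun l => W l) k (((c k : A) - (c i : A)) • u k))
            = ((c k : A) - (c i : A)) • (u k : V) := fun k => he_of k _
        calc ∑ k, e (DirectSum.of (fun l => W l) k (((c k : A) - (c i : A)) • u k))
            = ∑ k, (((c k : A) - (c i : A)) • (u k : V)) :=
              Finset.sum_congr rfl fun k _ => this k
          _ = ∑ k, ((c k : A) • (u k : V) - (c i : A) • (u k : V)) := by
              simp [sub_smul]
          _ = 0 := by rw [Finset.sum_sub_distrib, ← h1, ← h2, sub_self]
      have h4 : (∑ k, DirectSum.of (fun l => W l) k (((c k : A) - (c i : A)) • u k)) = 0 := by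
        apply e.injective
        rw [h3, map_zero]
      have h5 : ((c j : A) - (c i : A)) • u j = 0 := by
        have := congrFun (congrArg DFunLike.coe h4) j
        rw [DFinsupp.finset_sum_apply] at this
        rw [Finset.sum_eq_single j] at this
        · simp at this; exact this
        · intro k _ hkj
          exact DirectSum.of_eq_of_ne _ _ _ hkj.symm
        · intro habs; exact absurd (Finset.mem_univ j) habs
      have hu0 : u j = 0 := by
        have hU := hunit i j (fun hh => hji hh.symm)
        exact (hU.smul_eq_zero).1 h5
      rw [hu0]; rfl
    have : h x = (u i : V) := by
      rw [hsum (h x), Finset.sum_eq_single i]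
      · intro k _ hki; exact hzero k hki
      · intro habs; exact absurd (Finset.mem_univ i) habs
    rw [this]
    exact (u i).2
  · intro hpres
    ext v
    show h (t v) = t (h v)
    conv_lhs => rw [hsum v]
    conv_rhs => rw [hsum v]
    rw [map_sum, map_sum, map_sum, map_sum]
    refine Finset.sum_congr rfl fun j _ => ?_
    set u := e.symm v with hu
    rw [ht j _ (u j).2, map_smul, ht j _ (hpres j _ (u j).2)]
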